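/- In a monomial model where the exponent matrix A has all entries in {0,1} (a multilinear model), for any θ̃_i-covariation scheme the sensitivity function σ(P)(E) under any linear covariation scheme is an affine function of θ̃_i, provided each atom's monomial contains at most one parameter from each block S_j (as holds when the rows restricted to S_j sum to at most 1). -/

import Mathlib

open Finset

/-- In a multilinear monomial model (all exponents in `{0,1}`) where each atom uses at
most one parameter from the varied block `S_j`, the sensitivity function under any
linear covariation scheme is an affine function of `θ̃ᵢ`. -/
theorem stmt_13 {Y : Type*} [Fintype Y] {k : ℕ}
    (A : Y → Fin k → ℕ) (θ : Fin k → ℝ) (Sj : Finset (Fin k))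
    (hθpos : ∀ i, 0 < θ i) (hsum : ∑ i ∈ Sj, θ i = 1)
    (hbin : ∀ (y : Y) (i : Fin k), A y i ≤ 1)
    (hrow : ∀ y : Y, ∑ j ∈ Sj, A y j ≤ 1)
    (i₀ : Fin k) (hi₀ : i₀ ∈ Sj)
    (γ δ : Fin k → ℝ)
    (hsum' : ∀ t : ℝ, t + ∑ j ∈ Sj.erase i₀, (γ j * t + δ j) = 1)
    (E : Finset Y) :
    ∃ a b : ℝ, ∀ t : ℝ,
      ∑ y ∈ E, t ^ A y i₀ * (∏ j ∈ Sj.erase i₀, (γ j * t + δ j) ^ A y j)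
          * ∏ i ∈ Sjᶜ, θ i ^ A y i
        = a * t + b := by
  have atom : ∀ y : Y, ∃ a b : ℝ, ∀ t : ℝ,
      t ^ A y i₀ * (∏ j ∈ Sj.erase i₀, (γ j * t + δ j) ^ A y j)
          * ∏ i ∈ Sjᶜ, θ i ^ A y i = a * t + b := by
    intro y
    set C : ℝ := ∏ i ∈ Sjᶜ, θ i ^ A y i with hC
    have hsplit : A y i₀ + ∑ j ∈ Sj.erase i₀, A y j = ∑ j ∈ Sj, A y j :=
      Finset.add_sum_erase _ _ hi₀
    have hle : A y i₀ + ∑ j ∈ Sj.erase i₀, A y j ≤ 1 := hsplit ▸ hrow y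
    rcases Nat.le_one_iff_eq_zero_or_eq_one.mp (hbin y i₀) with h0 | h1
    · -- A y i₀ = 0
      have hle' : ∑ j ∈ Sj.erase i₀, A y j ≤ 1 := by omega
      rcases Nat.le_one_iff_eq_zero_or_eq_one.mp hle' with hs0 | hs1
      · -- all exponents vanish
        refine ⟨0, C, fun t => ?_⟩
        have hz : ∀ j ∈ Sj.erase i₀, A y j = 0 := by
          intro j hj
          exact Finset.sum_eq_zero_iff.mp hs0 j hj
        have hprod : (∏ j ∈ Sj.erase i₀, (γ j * t + δ j) ^ A y j) = 1 :=
          Finset.prod_eq_one (fun j hj => by rw [hz j hj, pow_zero])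
        rw [h0, hprod, pow_zero]; ring
      · -- exactly one j with exponent one
        have : ∃ j ∈ Sj.erase i₀, A y j ≠ 0 := by
          by_contra h
          push_neg at h
          have : ∑ j ∈ Sj.erase i₀, A y j = 0 :=
            Finset.sum_eq_zero fun j hj => h j hj
          omega
        obtain ⟨j, hj, hjne⟩ := this
        have hj1 : A y j = 1 := by have := hbin y j; omega
        have hrest : ∑ j' ∈ (Sj.erase i₀).erase j, A y j' = 0 := by
          have := Finset.add_sum_erase _ (A y) hj
          omega
        refine ⟨γ j * C, δ j * C, fun t => ?_⟩
        have hprod : (∏ j' ∈ Sj.erase i₀, (γ j' * t + δ j') ^ A y j')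
            = γ j * t + δ j := by
          rw [← Finset.add_sum_erase _ _ hj] at *
          rw [← Finset.prod_erase_mul _ _ hj, hj1, pow_one]
          have hone : (∏ j' ∈ (Sj.erase i₀).erase j, (γ j' * t + δ j') ^ A y j') = 1 :=
            Finset.prod_eq_one (fun j' hj' => by
              rw [Finset.sum_eq_zero_iff.mp hrest j' hj', pow_zero])
          rw [hone, one_mul]
        rw [h0, hprod, pow_zero]; ring
    · -- A y i₀ = 1
      have hs0 : ∑ j ∈ Sj.erase i₀, A y j = 0 := by omega
      refine ⟨C, 0, fun t => ?_⟩
      have hprod : (∏ j ∈ Sj.erase i₀, (γ j * t + δ j) ^ A y j) = 1 :=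
        Finset.prod_eq_one (fun j hj => by
          rw [Finset.sum_eq_zero_iff.mp hs0 j hj, pow_zero])
      rw [h1, hprod, pow_one]; ring
  choose a b hab using atom
  refine ⟨∑ y ∈ E, a y, ∑ y ∈ E, b y, fun t => ?_⟩
  rw [Finset.sum_congr rfl (fun y _ => hab y t), Finset.sum_add_distrib,
    ← Finset.sum_mul]
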